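/- Flux identity over a graph domain (divergence theorem used in the wall-law remainder estimate): let ω : ℝ → ℝ be C¹, let a > 0 and h ∈ ℝ with ω(t) < h for all t ∈ [0,a], and let v = (v₁,v₂) : ℝ² → ℝ² be C¹ on a neighborhood of the closed region D = {(t,y) : 0 ≤ t ≤ a, ω(t) ≤ y ≤ h}, with div v = ∂₁v₁ + ∂₂v₂ = 0 on D and v(t, ω(t)) = 0 for all t ∈ [0,a]. Then ∫₀ᵃ v₂(t, h) dt = ∫_{ω(0)}^{h} v₁(0, y) dy − ∫_{ω(a)}^{h} v₁(a, y) dy. -/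

import Mathlib

/-- Partial derivative in the first variable of a function of two real variables. -/
noncomputable def pd1 (f : ℝ → ℝ → ℝ) : ℝ → ℝ → ℝ :=
  fun a b => deriv (fun t => f t b) a

/-- Partial derivative in the second variable of a function of two real variables. -/
noncomputable def pd2 (f : ℝ → ℝ → ℝ) : ℝ → ℝ → ℝ :=
  fun a b => deriv (fun t => f a t) b

open Set MeasureTheory Metric Filter Topology

section Aux

variable {f : ℝ → ℝ → ℝ} {V : Set (ℝ × ℝ)}

lemma hasDerivAt_fst_fderiv (hV : IsOpen V)
    (hf : ContDiffOn ℝ 1 (fun p : ℝ × ℝ => f p.1 p.2) V) {t y : ℝ} (hty : (t, y) ∈ V) :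
    HasDerivAt (fun s => f s y)
      (fderiv ℝ (fun p : ℝ × ℝ => f p.1 p.2) (t, y) ((1 : ℝ), (0 : ℝ))) t := by
  have hdiff : DifferentiableAt ℝ (fun p : ℝ × ℝ => f p.1 p.2) (t, y) :=
    (hf.differentiableOn one_ne_zero).differentiableAt (hV.mem_nhds hty)
  have hline : HasDerivAt (fun s : ℝ => ((s, y) : ℝ × ℝ)) ((1 : ℝ), (0 : ℝ)) t :=
    (hasDerivAt_id t).prodMk (hasDerivAt_const t y)
  exact hdiff.hasFDerivAt.comp_hasDerivAt t hline

lemma hasDerivAt_snd_fderiv (hV : IsOpen V)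
    (hf : ContDiffOn ℝ 1 (fun p : ℝ × ℝ => f p.1 p.2) V) {t y : ℝ} (hty : (t, y) ∈ V) :
    HasDerivAt (fun s => f t s)
      (fderiv ℝ (fun p : ℝ × ℝ => f p.1 p.2) (t, y) ((0 : ℝ), (1 : ℝ))) y := by
  have hdiff : DifferentiableAt ℝ (fun p : ℝ × ℝ => f p.1 p.2) (t, y) :=
    (hf.differentiableOn one_ne_zero).differentiableAt (hV.mem_nhds hty)
  have hline : HasDerivAt (fun s : ℝ => ((t, s) : ℝ × ℝ)) ((0 : ℝ), (1 : ℝ)) y :=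
    (hasDerivAt_const y t).prodMk (hasDerivAt_id y)
  exact hdiff.hasFDerivAt.comp_hasDerivAt y hline

lemma pd1_eq_fderiv (hV : IsOpen V)
    (hf : ContDiffOn ℝ 1 (fun p : ℝ × ℝ => f p.1 p.2) V) {t y : ℝ} (hty : (t, y) ∈ V) :
    pd1 f t y = fderiv ℝ (fun p : ℝ × ℝ => f p.1 p.2) (t, y) ((1 : ℝ), (0 : ℝ)) :=
  (hasDerivAt_fst_fderiv hV hf hty).deriv

lemma pd2_eq_fderiv (hV : IsOpen V)
    (hf : ContDiffOn ℝ 1 (fun p : ℝ × ℝ => f p.1 p.2) V) {t y : ℝ} (hty : (t, y) ∈ V) :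
    pd2 f t y = fderiv ℝ (fun p : ℝ × ℝ => f p.1 p.2) (t, y) ((0 : ℝ), (1 : ℝ)) :=
  (hasDerivAt_snd_fderiv hV hf hty).deriv

lemma hasDerivAt_pd1 (hV : IsOpen V)
    (hf : ContDiffOn ℝ 1 (fun p : ℝ × ℝ => f p.1 p.2) V) {t y : ℝ} (hty : (t, y) ∈ V) :
    HasDerivAt (fun s => f s y) (pd1 f t y) t := by
  rw [pd1_eq_fderiv hV hf hty]; exact hasDerivAt_fst_fderiv hV hf hty

lemma hasDerivAt_pd2 (hV : IsOpen V)
    (hf : ContDiffOn ℝ 1 (fun p : ℝ × ℝ => f p.1 p.2) V) {t y : ℝ} (hty : (t, y) ∈ V) :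
    HasDerivAt (fun s => f t s) (pd2 f t y) y := by
  rw [pd2_eq_fderiv hV hf hty]; exact hasDerivAt_snd_fderiv hV hf hty

lemma continuousOn_pd1 (hV : IsOpen V)
    (hf : ContDiffOn ℝ 1 (fun p : ℝ × ℝ => f p.1 p.2) V) :
    ContinuousOn (fun p : ℝ × ℝ => pd1 f p.1 p.2) V := by
  have h1 : ContinuousOn (fun p => fderiv ℝ (fun p : ℝ × ℝ => f p.1 p.2) p) V :=
    hf.continuousOn_fderiv_of_isOpen hV le_rfl
  have h2 : ContinuousOn
      (fun p => fderiv ℝ (fun p : ℝ × ℝ => f p.1 p.2) p ((1 : ℝ), (0 : ℝ))) V :=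
    h1.clm_apply continuousOn_const
  exact h2.congr fun p hp => pd1_eq_fderiv hV hf hp

lemma continuousOn_pd2 (hV : IsOpen V)
    (hf : ContDiffOn ℝ 1 (fun p : ℝ × ℝ => f p.1 p.2) V) :
    ContinuousOn (fun p : ℝ × ℝ => pd2 f p.1 p.2) V := by
  have h1 : ContinuousOn (fun p => fderiv ℝ (fun p : ℝ × ℝ => f p.1 p.2) p) V :=
    hf.continuousOn_fderiv_of_isOpen hV le_rfl
  have h2 : ContinuousOn
      (fun p => fderiv ℝ (fun p : ℝ × ℝ => f p.1 p.2) p ((0 : ℝ), (1 : ℝ))) V :=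
    h1.clm_apply continuousOn_const
  exact h2.congr fun p hp => pd2_eq_fderiv hV hf hp

end Aux

/-- Flux identity over a graph domain: if `v = (v₁,v₂)` is `C¹` on a neighborhood of
the region `D` between the graph of a `C¹` function `ω` and the line `y = h` over
`[0,a]`, divergence free on `D`, and vanishes on the graph of `ω`, then the flux
through the top equals the difference of the fluxes through the lateral sides. -/
theorem flux_identity_graph_domain
    (ω : ℝ → ℝ) (hω : ContDiff ℝ 1 ω)
    (a h : ℝ) (ha : 0 < a) (hh : ∀ t ∈ Set.Icc (0 : ℝ) a, ω t < h)
    (v1 v2 : ℝ → ℝ → ℝ)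
    (D : Set (ℝ × ℝ))
    (hD : D = {p : ℝ × ℝ | p.1 ∈ Set.Icc (0 : ℝ) a ∧ p.2 ∈ Set.Icc (ω p.1) h})
    (U : Set (ℝ × ℝ)) (hU : IsOpen U) (hDU : D ⊆ U)
    (hv1 : ContDiffOn ℝ 1 (fun p : ℝ × ℝ => v1 p.1 p.2) U)
    (hv2 : ContDiffOn ℝ 1 (fun p : ℝ × ℝ => v2 p.1 p.2) U)
    (hdiv : ∀ p ∈ D, pd1 v1 p.1 p.2 + pd2 v2 p.1 p.2 = 0)
    (hbc : ∀ t ∈ Set.Icc (0 : ℝ) a, v1 t (ω t) = 0 ∧ v2 t (ω t) = 0) :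
    ∫ t in (0:ℝ)..a, v2 t h
      = (∫ y in (ω 0)..h, v1 0 y) - ∫ y in (ω a)..h, v1 a y := by
  have hωc : Continuous ω := hω.continuous
  -- the main derivative computation
  have key : ∀ t₀ ∈ Set.uIcc (0:ℝ) a,
      HasDerivAt (fun t => ∫ y in (ω t)..h, v1 t y) (-(v2 t₀ h)) t₀ := by
    intro t₀ ht₀
    rw [Set.uIcc_of_le ha.le] at ht₀
    set c := ω t₀ with hc
    have hch : c < h := hh t₀ ht₀
    -- a tube around the segment {t₀} × [c, h] inside U
    have hKU : (({t₀} : Set ℝ) ×ˢ Set.Icc c h) ⊆ U := by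
      intro p hp
      apply hDU
      rw [hD]
      obtain ⟨hp1, hp2⟩ := hp
      simp only [Set.mem_singleton_iff] at hp1
      refine ⟨?_, ?_⟩
      · rw [hp1]; exact ht₀
      · rw [hp1]; exact hp2
    have hK : IsCompact (({t₀} : Set ℝ) ×ˢ Set.Icc c h) :=
      isCompact_singleton.prod isCompact_Icc
    obtain ⟨δ, hδ, hthick⟩ := hK.exists_thickening_subset_open hU hKU
    set V : Set (ℝ × ℝ) := Set.Ioo (t₀ - δ/2) (t₀ + δ/2) ×ˢ Set.Ioo (c - δ/2) (h + δ/2)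
      with hVdef
    have hVopen : IsOpen V := isOpen_Ioo.prod isOpen_Ioo
    have hVU : V ⊆ U := by
      intro p hp
      apply hthick
      obtain ⟨hp1, hp2⟩ := hp
      rw [Metric.mem_thickening_iff]
      set y' := max c (min p.2 h) with hy'
      have h1 : c ≤ y' := le_max_left _ _
      have h2 : y' ≤ h := max_le hch.le (min_le_right _ _)
      have h4 : p.2 - δ/2 < min p.2 h := by
        rcases le_total p.2 h with h' | h'
        · rw [min_eq_left h']; linarith
        · rw [min_eq_right h']; linarith [hp2.2]
      have h5 : y' < p.2 + δ/2 := by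
        apply max_lt
        · linarith [hp2.1]
        · exact lt_of_le_of_lt (min_le_left _ _) (by linarith)
      refine ⟨(t₀, y'), ⟨rfl, h1, h2⟩, ?_⟩
      rw [Prod.dist_eq]
      apply max_lt
      · rw [Real.dist_eq, abs_sub_lt_iff]
        constructor <;> [linarith [hp1.2]; linarith [hp1.1]]
      · rw [Real.dist_eq, abs_sub_lt_iff]
        have h6 : min p.2 h ≤ y' := le_max_right _ _
        constructor <;> linarith
    have hv1V : ContDiffOn ℝ 1 (fun p : ℝ × ℝ => v1 p.1 p.2) V := hv1.mono hVU
    have hv2V : ContDiffOn ℝ 1 (fun p : ℝ × ℝ => v2 p.1 p.2) V := hv2.mono hVU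
    have ht₀V : t₀ ∈ Set.Ioo (t₀ - δ/2) (t₀ + δ/2) := ⟨by linarith, by linarith⟩
    have hIccIoo : Set.Icc c h ⊆ Set.Ioo (c - δ/2) (h + δ/2) := fun y hy =>
      ⟨by linarith [hy.1], by linarith [hy.2]⟩
    -- continuity of vertical sections of v1
    have sec1 : ∀ t ∈ Set.Ioo (t₀ - δ/2) (t₀ + δ/2),
        ContinuousOn (fun y => v1 t y) (Set.Ioo (c - δ/2) (h + δ/2)) := by
      intro t ht
      exact hv1V.continuousOn.comp
        ((continuous_const.prodMk continuous_id).continuousOn)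
        (fun y hy => ⟨ht, hy⟩)
    -- Claim 3 : local splitting of the integral
    have hev : ∀ᶠ t in 𝓝 t₀,
        (∫ y in (ω t)..h, v1 t y)
          = (∫ y in c..h, v1 t y) - ∫ y in c..(ω t), v1 t y := by
      have e1 : ∀ᶠ t in 𝓝 t₀, t ∈ Set.Ioo (t₀ - δ/2) (t₀ + δ/2) :=
        Ioo_mem_nhds ht₀V.1 ht₀V.2
      have e2 : ∀ᶠ t in 𝓝 t₀, ω t ∈ Set.Ioo (c - δ/2) (h + δ/2) :=
        hωc.continuousAt (x := t₀) (Ioo_mem_nhds (by linarith) (by linarith))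
      filter_upwards [e1, e2] with t ht hωt
      have hmemc : c ∈ Set.Ioo (c - δ/2) (h + δ/2) := ⟨by linarith, by linarith⟩
      have hmemh : h ∈ Set.Ioo (c - δ/2) (h + δ/2) := ⟨by linarith, by linarith⟩
      have i1 : IntervalIntegrable (fun y => v1 t y) volume c (ω t) :=
        ((sec1 t ht).mono (Set.ordConnected_Ioo.uIcc_subset hmemc hωt)).intervalIntegrable
      have i2 : IntervalIntegrable (fun y => v1 t y) volume (ω t) h :=
        ((sec1 t ht).mono (Set.ordConnected_Ioo.uIcc_subset hωt hmemh)).intervalIntegrable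
      have := intervalIntegral.integral_add_adjacent_intervals i1 i2
      linarith
    -- Claim 1 : Leibniz rule for A
    have hball : Metric.ball t₀ (δ/4) ⊆ Set.Ioo (t₀ - δ/2) (t₀ + δ/2) := by
      intro t ht
      rw [Metric.mem_ball, Real.dist_eq, abs_sub_lt_iff] at ht
      exact ⟨by linarith [ht.1], by linarith [ht.2]⟩
    have hK2V : (Set.Icc (t₀ - δ/4) (t₀ + δ/4) ×ˢ Set.Icc c h) ⊆ V := by
      rintro p ⟨hp1, hp2⟩
      exact ⟨⟨by linarith [hp1.1], by linarith [hp1.2]⟩, hIccIoo hp2⟩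
    obtain ⟨M, hM⟩ := (isCompact_Icc.prod isCompact_Icc).exists_bound_of_continuousOn
      ((continuousOn_pd1 hVopen hv1V).mono hK2V)
    have huIocIcc : Set.uIoc c h ⊆ Set.Icc c h := by
      rw [Set.uIoc_of_le hch.le]; exact Set.Ioc_subset_Icc_self
    have hmeas : ∀ᶠ t in 𝓝 t₀,
        AEStronglyMeasurable (fun y => v1 t y) (volume.restrict (Set.uIoc c h)) := by
      have e1 : ∀ᶠ t in 𝓝 t₀, t ∈ Set.Ioo (t₀ - δ/2) (t₀ + δ/2) :=
        Ioo_mem_nhds ht₀V.1 ht₀V.2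
      filter_upwards [e1] with t ht
      exact ((sec1 t ht).mono (fun y hy => hIccIoo (huIocIcc hy))).aestronglyMeasurable
        measurableSet_uIoc
    have hFint : IntervalIntegrable (fun y => v1 t₀ y) volume c h :=
      ((sec1 t₀ ht₀V).mono (fun y hy => hIccIoo ((Set.uIcc_of_le hch.le) ▸ hy))).intervalIntegrable
    have hF'meas : AEStronglyMeasurable (fun y => pd1 v1 t₀ y)
        (volume.restrict (Set.uIoc c h)) := by
      have : ContinuousOn (fun y => pd1 v1 t₀ y) (Set.uIoc c h) := by
        apply ContinuousOn.comp (continuousOn_pd1 hVopen hv1V)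
          ((continuous_const.prodMk continuous_id).continuousOn)
        intro y hy
        exact ⟨ht₀V, hIccIoo (huIocIcc hy)⟩
      exact this.aestronglyMeasurable measurableSet_uIoc
    have hbound : ∀ᵐ y ∂(volume : Measure ℝ), y ∈ Set.uIoc c h →
        ∀ t ∈ Metric.ball t₀ (δ/4), ‖pd1 v1 t y‖ ≤ M := by
      refine Filter.Eventually.of_forall fun y hy t htb => ?_
      have ht' : t ∈ Set.Icc (t₀ - δ/4) (t₀ + δ/4) := by
        rw [Metric.mem_ball, Real.dist_eq, abs_sub_lt_iff] at htb
        exact ⟨by linarith [htb.1], by linarith [htb.2]⟩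
      exact hM (t, y) ⟨ht', huIocIcc hy⟩
    have hdiff2 : ∀ᵐ y ∂(volume : Measure ℝ), y ∈ Set.uIoc c h →
        ∀ t ∈ Metric.ball t₀ (δ/4), HasDerivAt (fun t => v1 t y) (pd1 v1 t y) t := by
      refine Filter.Eventually.of_forall fun y hy t htb => ?_
      exact hasDerivAt_pd1 hVopen hv1V ⟨hball htb, hIccIoo (huIocIcc hy)⟩
    have leib := intervalIntegral.hasDerivAt_integral_of_dominated_loc_of_deriv_le
      (F := fun t y => v1 t y) (F' := fun t y => pd1 v1 t y) (bound := fun _ => M)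
      (Metric.ball_mem_nhds t₀ (show (0:ℝ) < δ/4 by linarith)) hmeas hFint hF'meas hbound
      intervalIntegrable_const hdiff2
    have hA : HasDerivAt (fun t => ∫ y in c..h, v1 t y)
        (∫ y in c..h, pd1 v1 t₀ y) t₀ := leib.2
    -- Claim 2 : the moving lower endpoint contributes nothing
    have hB : HasDerivAt (fun t => ∫ y in c..(ω t), v1 t y) 0 t₀ := by
      rw [hasDerivAt_iff_isLittleO]
      simp only [← hc, intervalIntegral.integral_same, sub_zero, smul_zero]
      rw [Asymptotics.isLittleO_iff]
      intro ε hε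
      have hωd : HasDerivAt ω (deriv ω t₀) t₀ :=
        (hω.differentiable one_ne_zero t₀).hasDerivAt
      obtain ⟨C, hC0, hCw⟩ := hωd.hasFDerivAt.isBigO_sub.exists_pos
      have hCev := hCw.bound
      set ε' := ε / C with hε'
      have hε'pos : 0 < ε' := div_pos hε hC0
      have hv10 : v1 t₀ c = 0 := (hbc t₀ ht₀).1
      have hcV : (t₀, c) ∈ V := ⟨ht₀V, ⟨by linarith, by linarith⟩⟩
      have hcont : ContinuousAt (fun p : ℝ × ℝ => v1 p.1 p.2) (t₀, c) :=
        (hv1V.continuousOn.continuousAt (hVopen.mem_nhds hcV))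
      have h0 : Filter.Tendsto (fun p : ℝ × ℝ => v1 p.1 p.2) (𝓝 (t₀, c)) (𝓝 0) := by
        simpa [ContinuousAt, hv10] using hcont
      have hsm : ∀ᶠ p : ℝ × ℝ in 𝓝 (t₀, c), ‖v1 p.1 p.2‖ < ε' := by
        have : ∀ᶠ x : ℝ in 𝓝 0, ‖x‖ < ε' := by
          apply Filter.eventually_of_mem (Metric.ball_mem_nhds _ hε'pos)
          intro x hx; simpa [Real.norm_eq_abs, Real.dist_eq] using hx
        exact h0.eventually this
      obtain ⟨r, hr0, hrball⟩ := Metric.eventually_nhds_iff_ball.mp hsm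
      have e1 : ∀ᶠ t in 𝓝 t₀, dist t t₀ < r := by
        have := Metric.ball_mem_nhds t₀ hr0
        filter_upwards [this] with t ht
        exact Metric.mem_ball.mp ht
      have e2 : ∀ᶠ t in 𝓝 t₀, |ω t - c| < r := by
        have : ∀ᶠ t in 𝓝 t₀, ω t ∈ Metric.ball c r :=
          hωc.continuousAt (x := t₀) (Metric.ball_mem_nhds _ hr0)
        filter_upwards [this] with t ht
        rwa [Metric.mem_ball, Real.dist_eq] at ht
      filter_upwards [hCev, e1, e2] with t hC1 ht1 ht2
      have hseg : ∀ y ∈ Set.uIoc c (ω t), ‖v1 t y‖ ≤ ε' := by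
        intro y hy
        have hy' := Set.mem_uIcc.mp (Set.uIoc_subset_uIcc hy)
        have h5 : |y - c| < r := by
          rw [abs_lt]; rw [abs_lt] at ht2
          rcases hy' with ⟨hy1, hy2⟩ | ⟨hy1, hy2⟩ <;> constructor <;> linarith
        apply le_of_lt
        apply hrball (t, y)
        rw [Metric.mem_ball, Prod.dist_eq]
        exact max_lt ht1 (by rwa [Real.dist_eq])
      have hnorm := intervalIntegral.norm_integral_le_of_norm_le_const hseg
      calc ‖∫ y in c..(ω t), v1 t y‖ ≤ ε' * |ω t - c| := hnorm
        _ ≤ ε' * (C * ‖t - t₀‖) := by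
            apply mul_le_mul_of_nonneg_left _ hε'pos.le
            simpa [Real.norm_eq_abs] using hC1
        _ = ε * ‖t - t₀‖ := by
            rw [hε']; field_simp
    -- assemble the derivative of F
    have hAB : HasDerivAt
        (fun t => (∫ y in c..h, v1 t y) - ∫ y in c..(ω t), v1 t y)
        (∫ y in c..h, pd1 v1 t₀ y) t₀ := by
      have hAB' := hA.sub hB; rw [sub_zero] at hAB'; exact hAB'
    have hF : HasDerivAt (fun t => ∫ y in (ω t)..h, v1 t y)
        (∫ y in c..h, pd1 v1 t₀ y) t₀ := hAB.congr_of_eventuallyEq hev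
    -- compute the derivative value
    have hsub1 : Set.EqOn (fun y => pd1 v1 t₀ y) (fun y => -(pd2 v2 t₀ y))
        (Set.uIcc c h) := by
      intro y hy
      rw [Set.uIcc_of_le hch.le] at hy
      have hmem : (t₀, y) ∈ D := by rw [hD]; exact ⟨ht₀, hy⟩
      have := hdiv _ hmem
      simp only at this ⊢
      linarith
    have ftc2 : (∫ y in c..h, pd2 v2 t₀ y) = v2 t₀ h - v2 t₀ c := by
      apply intervalIntegral.integral_eq_sub_of_hasDerivAt
      · intro y hy
        rw [Set.uIcc_of_le hch.le] at hy
        exact hasDerivAt_pd2 hVopen hv2V ⟨ht₀V, hIccIoo hy⟩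
      · apply ContinuousOn.intervalIntegrable
        apply ContinuousOn.comp (continuousOn_pd2 hVopen hv2V)
          ((continuous_const.prodMk continuous_id).continuousOn)
        intro y hy
        rw [Set.uIcc_of_le hch.le] at hy
        exact ⟨ht₀V, hIccIoo hy⟩
    have hval : (∫ y in c..h, pd1 v1 t₀ y) = -(v2 t₀ h) := by
      rw [intervalIntegral.integral_congr hsub1, intervalIntegral.integral_neg, ftc2,
        (hbc t₀ ht₀).2]
      ring
    rwa [hval] at hF
  -- integrate the derivative
  have hInt : IntervalIntegrable (fun t => -(v2 t h)) volume 0 a := by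
    apply ContinuousOn.intervalIntegrable
    apply ContinuousOn.neg
    apply ContinuousOn.comp hv2.continuousOn
      ((continuous_id.prodMk continuous_const).continuousOn)
    intro t ht
    rw [Set.uIcc_of_le ha.le] at ht
    apply hDU
    rw [hD]
    exact ⟨ht, ⟨(hh t ht).le, le_rfl⟩⟩
  have hmain := intervalIntegral.integral_eq_sub_of_hasDerivAt key hInt
  rw [intervalIntegral.integral_neg] at hmain
  have hend : (∫ t in (0:ℝ)..a, v2 t h)
      = (∫ y in (ω 0)..h, v1 0 y) - ∫ y in (ω a)..h, v1 a y := by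
    linarith
  exact hend
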